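/- Let α₀, α₁ ∈ ℝ with α₀ > |α₁|. Then ∫₀¹ log(α₀ + α₁ cos(2πξ)) dξ = log((α₀ + √(α₀² − α₁²))/2), where log is the real natural logarithm. -/

import Mathlib

open Real Complex MeasureTheory intervalIntegral Metric

lemma aux_pos (r θ : ℝ) (hr : |r| < 1) : 0 < 1 + 2*r*Real.cos θ + r^2 := by
  nlinarith [Real.neg_one_le_cos θ, Real.cos_le_one θ, abs_nonneg r, _root_.sq_abs r,
    neg_abs_le r, le_abs_self r]

lemma key_integral (r : ℝ) (hr : |r| < 1) :
    ∫ θ in (0:ℝ)..(2*Real.pi), Real.log (1 + 2*r*Real.cos θ + r^2) = 0 := by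
  set f : ℂ → ℂ := fun z => Complex.log (1 + (r:ℂ) * z) with hfdef
  have hre : ∀ z : ℂ, ‖z‖ ≤ 1 → (0:ℝ) < (1 + (r:ℂ) * z).re := by
    intro z hz
    have h1 : |z.re| ≤ 1 := le_trans (Complex.abs_re_le_norm z) hz
    have : |r * z.re| < 1 := by
      rw [abs_mul]
      calc |r| * |z.re| ≤ |r| * 1 := by
            exact mul_le_mul_of_nonneg_left h1 (abs_nonneg r)
        _ = |r| := mul_one _
        _ < 1 := hr
    simp only [Complex.add_re, Complex.one_re, Complex.mul_re, Complex.ofReal_re,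
      Complex.ofReal_im, zero_mul, sub_zero]
    nlinarith [neg_abs_le (r * z.re)]
  have hdiff : ∀ z ∈ closedBall (0:ℂ) 1, DifferentiableAt ℂ f z := by
    intro z hz
    simp only [mem_closedBall, dist_zero_right] at hz
    exact DifferentiableAt.clog (by fun_prop) (Complex.mem_slitPlane_iff.2 (Or.inl (hre z hz)))
  have hcl : DiffContOnCl ℂ f (ball (0:ℂ) 1) := by
    apply DifferentiableOn.diffContOnCl
    rw [closure_ball (0:ℂ) one_ne_zero]
    exact fun z hz => (hdiff z hz).differentiableWithinAt
  have hcauchy := hcl.circleIntegral_sub_inv_smul (Metric.mem_ball_self one_pos)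
  have hf0 : f 0 = 0 := by simp [hfdef]
  rw [hf0, smul_zero] at hcauchy
  -- unfold the circle integral
  rw [circleIntegral] at hcauchy
  have heq : ∀ θ : ℝ, deriv (circleMap 0 1) θ • ((circleMap 0 1 θ - 0)⁻¹ • f (circleMap 0 1 θ))
      = Complex.I * f (circleMap 0 1 θ) := by
    intro θ
    have hne : circleMap 0 1 θ ≠ 0 := circleMap_ne_center one_ne_zero
    simp only [deriv_circleMap, sub_zero, smul_eq_mul]
    field_simp
  simp only [heq] at hcauchy
  rw [intervalIntegral.integral_const_mul] at hcauchy
  have hintf : ∫ θ in (0:ℝ)..(2*Real.pi), f (circleMap 0 1 θ) = 0 := by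
    rcases mul_eq_zero.1 hcauchy with h | h
    · exact absurd h Complex.I_ne_zero
    · exact h
  -- continuity of the composed map
  have hcont : Continuous fun θ : ℝ => f (circleMap 0 1 θ) := by
    apply Continuous.clog (by fun_prop)
    intro θ
    exact Complex.mem_slitPlane_iff.2 (Or.inl (hre _ (by simp [circleMap])))
  -- real part
  have hrepart : ∫ θ in (0:ℝ)..(2*Real.pi), (f (circleMap 0 1 θ)).re = 0 := by
    have h2π : (0:ℝ) ≤ 2*Real.pi := by positivity
    rw [intervalIntegral.integral_of_le h2π] at hintf ⊢
    have hint : IntegrableOn (fun θ : ℝ => f (circleMap 0 1 θ)) (Set.Ioc 0 (2*Real.pi)) :=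
      hcont.integrableOn_Ioc
    have := _root_.integral_re (𝕜 := ℂ) hint
    simp only [RCLike.re_to_complex] at this
    rw [this, hintf, Complex.zero_re]
  -- identify the real part
  have hid : ∀ θ : ℝ, (f (circleMap 0 1 θ)).re
      = (1/2) * Real.log (1 + 2*r*Real.cos θ + r^2) := by
    intro θ
    have hne : (1 + (r:ℂ) * circleMap 0 1 θ) ≠ 0 := by
      intro hz
      have := hre (circleMap 0 1 θ) (by simp [circleMap])
      rw [hz] at this; simp at this
    rw [hfdef]
    simp only [Complex.log_re]
    rw [Complex.norm_def, Real.log_sqrt (Complex.normSq_nonneg _)]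
    rw [div_eq_mul_inv, mul_comm, ← one_div]
    congr 2
    simp only [Complex.normSq_apply, Complex.add_re, Complex.add_im, Complex.one_re,
      Complex.one_im, Complex.mul_re, Complex.mul_im, Complex.ofReal_re, Complex.ofReal_im,
      circleMap, Complex.ofReal_one, one_mul, zero_mul, Complex.exp_ofReal_mul_I_re,
      Complex.exp_ofReal_mul_I_im, zero_add, sub_zero]
    ring_nf
    nlinarith [Real.sin_sq_add_cos_sq θ]
  simp only [hid] at hrepart
  rw [intervalIntegral.integral_const_mul] at hrepart
  rcases mul_eq_zero.1 hrepart with h | h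
  · norm_num at h
  · exact h

/-- value of the logarithmic integral. -/
theorem stmt_5 (α₀ α₁ : ℝ) (h : |α₁| < α₀) :
    ∫ ξ in (0:ℝ)..1, Real.log (α₀ + α₁ * Real.cos (2 * Real.pi * ξ)) =
      Real.log ((α₀ + Real.sqrt (α₀ ^ 2 - α₁ ^ 2)) / 2) := by
  have hα₀ : 0 < α₀ := lt_of_le_of_lt (abs_nonneg α₁) h
  have hsq : 0 < α₀ ^ 2 - α₁ ^ 2 := by nlinarith [_root_.sq_abs α₁, abs_nonneg α₁]
  set s := Real.sqrt (α₀ ^ 2 - α₁ ^ 2) with hs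
  have hs_pos : 0 < s := Real.sqrt_pos.2 hsq
  have hs_sq : s ^ 2 = α₀ ^ 2 - α₁ ^ 2 := Real.sq_sqrt hsq.le
  set c := (α₀ + s) / 2 with hc
  have hc_pos : 0 < c := by positivity
  set r := α₁ / (2 * c) with hrdef
  have hr : |r| < 1 := by
    rw [hrdef, abs_div, abs_of_pos (by positivity : (0:ℝ) < 2*c), div_lt_one (by positivity)]
    calc |α₁| < α₀ := h
      _ ≤ α₀ + s := le_add_of_nonneg_right hs_pos.le
      _ = 2 * c := by rw [hc]; ring
  have hfactor : ∀ θ : ℝ, α₀ + α₁ * Real.cos θ = c * (1 + 2*r*Real.cos θ + r^2) := by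
    intro θ
    rw [hrdef, hc]
    have h2 : α₀ + s ≠ 0 := by positivity
    field_simp
    nlinarith [hs_sq]
  have hchg : ∫ ξ in (0:ℝ)..1, Real.log (α₀ + α₁ * Real.cos (2 * Real.pi * ξ))
      = (2*Real.pi)⁻¹ * ∫ θ in (0:ℝ)..(2*Real.pi), Real.log (α₀ + α₁ * Real.cos θ) := by
    have := intervalIntegral.integral_comp_mul_left (a := (0:ℝ)) (b := 1)
      (fun θ => Real.log (α₀ + α₁ * Real.cos θ)) (c := 2*Real.pi) (by positivity)
    simpa [smul_eq_mul] using this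
  rw [hchg]
  have hsplit : ∫ θ in (0:ℝ)..(2*Real.pi), Real.log (α₀ + α₁ * Real.cos θ)
      = 2*Real.pi * Real.log c := by
    have : ∀ θ : ℝ, Real.log (α₀ + α₁ * Real.cos θ)
        = Real.log c + Real.log (1 + 2*r*Real.cos θ + r^2) := by
      intro θ
      rw [hfactor θ, Real.log_mul hc_pos.ne' (aux_pos r θ hr).ne']
    simp only [this]
    rw [intervalIntegral.integral_add (intervalIntegrable_const)
      ((Continuous.log (by fun_prop) (fun x => (aux_pos r x hr).ne')).intervalIntegrable _ _),
      key_integral r hr]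
    simp [mul_comm]
  rw [hsplit]
  rw [← mul_assoc, inv_mul_cancel₀ (by positivity : (2:ℝ)*Real.pi ≠ 0), one_mul, hc]
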